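/- Let U ⊆ ℂ be an open set, let v : ℂ → ℂ be a function on U, let E ∈ ℂ, let Ξ : ℂ → ℂ be twice differentiable and nonvanishing on U, and let q ∈ ℂ be such that Ξ(x)²·(E − v(x)) + (1/2)·Ξ(x)·Ξ''(x) − (1/4)·Ξ'(x)² = −q² for all x ∈ U. Let Λ : ℂ → ℂ be differentiable and nonvanishing on U with Λ'(x)·Ξ(x) = Λ(x)·((1/2)·Ξ'(x) + q) for all x ∈ U. Then Λ is twice differentiable on U and Λ''(x) = (v(x) − E)·Λ(x) for all x ∈ U. -/

import Mathlib

/-- The integral-representation function `Λ` (characterized by `Λ' Ξ = Λ ((1/2) Ξ' + q)`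
with `Q = -q²`) solves the Schrödinger-type equation `Λ'' = (v - E) Λ` on `U`. -/
theorem integral_representation_solves_equation
    (U : Set ℂ) (hU : IsOpen U) (v : ℂ → ℂ) (E q : ℂ) (Ξ Λ : ℂ → ℂ)
    (hΞ : ∀ x ∈ U, DifferentiableAt ℂ Ξ x)
    (hΞ' : ∀ x ∈ U, DifferentiableAt ℂ (deriv Ξ) x)
    (hΞ0 : ∀ x ∈ U, Ξ x ≠ 0)
    (hQ : ∀ x ∈ U, Ξ x ^ 2 * (E - v x) + (1/2) * Ξ x * deriv (deriv Ξ) x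
      - (1/4) * (deriv Ξ x) ^ 2 = -q ^ 2)
    (hΛ : ∀ x ∈ U, DifferentiableAt ℂ Λ x)
    (hΛ0 : ∀ x ∈ U, Λ x ≠ 0)
    (hrel : ∀ x ∈ U, deriv Λ x * Ξ x = Λ x * ((1/2) * deriv Ξ x + q)) :
    (∀ x ∈ U, DifferentiableAt ℂ (deriv Λ) x) ∧
    (∀ x ∈ U, deriv (deriv Λ) x = (v x - E) * Λ x) := by
  have key : ∀ x ∈ U, DifferentiableAt ℂ (deriv Λ) x ∧
      deriv (deriv Λ) x = (v x - E) * Λ x := by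
    intro x hx
    set f : ℂ → ℂ := fun y => Λ y * ((1/2) * deriv Ξ y + q) with hf
    set g : ℂ → ℂ := fun y => f y / Ξ y with hg
    have heq : deriv Λ =ᶠ[nhds x] g := by
      filter_upwards [hU.mem_nhds hx] with y hy
      simp only [hg, hf]
      rw [eq_div_iff (hΞ0 y hy)]
      exact hrel y hy
    have hfd : DifferentiableAt ℂ f x :=
      (hΛ x hx).mul (((differentiableAt_const _).mul (hΞ' x hx)).add
        (differentiableAt_const _))
    have hgd : DifferentiableAt ℂ g x := hfd.div (hΞ x hx) (hΞ0 x hx)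
    have hd : DifferentiableAt ℂ (deriv Λ) x := heq.differentiableAt_iff.mpr hgd
    refine ⟨hd, ?_⟩
    have h1 : deriv (deriv Λ) x = deriv g x := heq.deriv_eq
    have h2 : deriv g x = (deriv f x * Ξ x - f x * deriv Ξ x) / Ξ x ^ 2 :=
      deriv_div hfd (hΞ x hx) (hΞ0 x hx)
    have h3 : deriv f x = deriv Λ x * ((1/2) * deriv Ξ x + q)
        + Λ x * ((1/2) * deriv (deriv Ξ) x) := by
      rw [hf, deriv_fun_mul (hΛ x hx) (((differentiableAt_const _).fun_mul (hΞ' x hx)).fun_add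
        (differentiableAt_const _)), deriv_fun_add ((differentiableAt_const _).fun_mul (hΞ' x hx))
        (differentiableAt_const _), deriv_const_mul _ (hΞ' x hx), deriv_const, add_zero]
    rw [h1, h2, h3, hf]
    have hQx := hQ x hx
    have hrelx := hrel x hx
    rw [div_eq_iff (pow_ne_zero 2 (hΞ0 x hx))]
    linear_combination ((1/2) * deriv Ξ x + q) * hrelx + Λ x * hQx
  exact ⟨fun x hx => (key x hx).1, fun x hx => (key x hx).2⟩
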